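/- arXiv:2603.23044 — 2 statements merged into one kernel-verified Lean document; each statement's English description precedes it below -/
import Mathlib

section
/- Let Ã(H) = [[A, A_u],[H, Λ]] with H = K·A − Λ·K + K·A_u·K for some K ∈ ℝ^{m×n}. Then the spectrum of Ã(H) equals the union of the spectrum of A + A_u·K and the spectrum of Λ − K·A_u. -/
open Matrix Polynomial

lemma spectrum_eq_charpoly_roots {k : Type*} [Fintype k] [DecidableEq k]
    (M : Matrix k k ℂ) : spectrum ℂ M = {μ | M.charpoly.IsRoot μ} := by
  ext μ
  have hdet : (algebraMap ℂ (Matrix k k ℂ) μ - M).det = M.charpoly.eval μ := by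
    rw [Matrix.charpoly, ← Polynomial.coe_evalRingHom, RingHom.map_det]
    congr 1
    ext i j
    by_cases h : i = j
    · subst h
      simp [charmatrix_apply_eq, Matrix.algebraMap_matrix_apply]
    · simp [charmatrix_apply_ne _ _ _ h, Matrix.algebraMap_matrix_apply, h]
  rw [spectrum.mem_iff, Matrix.isUnit_iff_isUnit_det, isUnit_iff_ne_zero, not_ne_iff, hdet]
  rfl

/-- With `H = K·A − Λ·K + K·A_u·K`, the spectrum of `Ã(H) = [[A, A_u],[H, Λ]]` equals the
union of the spectra of `A + A_u·K` and `Λ − K·A_u`. -/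
theorem spectrum_feedback_augmented (n m : ℕ)
    (A : Matrix (Fin n) (Fin n) ℝ) (Au : Matrix (Fin n) (Fin m) ℝ)
    (Λ : Matrix (Fin m) (Fin m) ℝ) (K : Matrix (Fin m) (Fin n) ℝ)
    (H : Matrix (Fin m) (Fin n) ℝ)
    (hH : H = K * A - Λ * K + K * Au * K) :
    spectrum ℂ ((Matrix.fromBlocks A Au H Λ).map (algebraMap ℝ ℂ)) =
      spectrum ℂ ((A + Au * K).map (algebraMap ℝ ℂ)) ∪
        spectrum ℂ ((Λ - K * Au).map (algebraMap ℝ ℂ)) := by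
  subst hH
  set f := algebraMap ℝ ℂ
  set Ac := A.map f
  set Auc := Au.map f
  set Λc := Λ.map f
  set Kc := K.map f
  have hmap : (Matrix.fromBlocks A Au (K * A - Λ * K + K * Au * K) Λ).map f =
      Matrix.fromBlocks Ac Auc (Kc * Ac - Λc * Kc + Kc * Auc * Kc) Λc := by
    rw [Matrix.fromBlocks_map, Matrix.fromBlocks_inj]
    refine ⟨rfl, rfl, ?_, rfl⟩
    ext i j
    simp [Ac, Auc, Λc, Kc, Matrix.mul_apply, map_sum]
  have hmap1 : (A + Au * K).map f = Ac + Auc * Kc := by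
    ext i j
    simp [Ac, Auc, Kc, Matrix.mul_apply, map_sum]
  have hmap2 : (Λ - K * Au).map f = Λc - Kc * Auc := by
    ext i j
    simp [Λc, Kc, Auc, Matrix.mul_apply, map_sum]
  rw [hmap, hmap1, hmap2]
  -- similarity transform
  set R := Matrix (Fin n ⊕ Fin m) (Fin n ⊕ Fin m) ℂ
  have hSinv : (Matrix.fromBlocks 1 0 (-Kc) 1 : R) * Matrix.fromBlocks 1 0 Kc 1 = 1 := by
    rw [Matrix.fromBlocks_multiply]
    simp [Matrix.fromBlocks_one]
  have hSinv' : (Matrix.fromBlocks 1 0 Kc 1 : R) * Matrix.fromBlocks 1 0 (-Kc) 1 = 1 := by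
    rw [Matrix.fromBlocks_multiply]
    simp [Matrix.fromBlocks_one]
  set u : Rˣ := ⟨Matrix.fromBlocks 1 0 (-Kc) 1, Matrix.fromBlocks 1 0 Kc 1, hSinv, hSinv'⟩
  have hconj : (u : R) * Matrix.fromBlocks Ac Auc (Kc * Ac - Λc * Kc + Kc * Auc * Kc) Λc *
      (u⁻¹ : Rˣ) = Matrix.fromBlocks (Ac + Auc * Kc) Auc 0 (Λc - Kc * Auc) := by
    show (Matrix.fromBlocks 1 0 (-Kc) 1 : R) *
        Matrix.fromBlocks Ac Auc (Kc * Ac - Λc * Kc + Kc * Auc * Kc) Λc *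
        Matrix.fromBlocks 1 0 Kc 1 = _
    rw [Matrix.fromBlocks_multiply, Matrix.fromBlocks_multiply, Matrix.fromBlocks_inj]
    refine ⟨?_, ?_, ?_, ?_⟩ <;>
      simp only [neg_one_smul, one_mul, mul_one, zero_mul, mul_zero, add_zero, zero_add,
        Matrix.add_mul, Matrix.neg_mul, Matrix.mul_neg, Matrix.zero_mul, Matrix.mul_zero,
        Matrix.one_mul, Matrix.mul_one] <;>
      first | rfl | abel
  have hspec : spectrum ℂ (Matrix.fromBlocks Ac Auc (Kc * Ac - Λc * Kc + Kc * Auc * Kc) Λc)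
      = spectrum ℂ (Matrix.fromBlocks (Ac + Auc * Kc) Auc 0 (Λc - Kc * Auc) : R) := by
    rw [← hconj, spectrum.units_conjugate]
  rw [hspec, spectrum_eq_charpoly_roots, spectrum_eq_charpoly_roots,
    spectrum_eq_charpoly_roots, Matrix.charpoly_fromBlocks_zero₂₁]
  ext μ
  simp [Polynomial.IsRoot, Set.mem_setOf_eq, mul_eq_zero]
end

section
/- Let A ∈ ℝ^{n×n} with (A, A_u) stabilizable, Λ ∈ ℝ^{m×m} with Λ ⪯ −β·I for some β > 0, and K ∈ ℝ^{m×n} such that A + A_u·K is Hurwitz and ‖K·A_u‖₂ < β. Then with H = K·A − Λ·K + K·A_u·K, the matrix Ã(H) = [[A, A_u],[H, Λ]] is Hurwitz. -/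
open Matrix
open scoped InnerProductSpace

lemma spec_iff_det {k : Type*} [Fintype k] [DecidableEq k] (M : Matrix k k ℂ) (μ : ℂ) :
    μ ∈ spectrum ℂ M ↔ (μ • (1 : Matrix k k ℂ) - M).det = 0 := by
  rw [spectrum.mem_iff, Algebra.algebraMap_eq_smul_one, Matrix.isUnit_iff_isUnit_det,
    isUnit_iff_ne_zero, not_ne_iff]

lemma re_lt_of_quadform {m : ℕ} (B : Matrix (Fin m) (Fin m) ℝ) (c : ℝ) (hc : c < 0)
    (hB : ∀ x : Fin m → ℝ, ∑ i, x i * B.mulVec x i ≤ c * ∑ i, x i ^ 2)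
    (μ : ℂ) (hμ : μ ∈ spectrum ℂ (B.map (algebraMap ℝ ℂ))) : μ.re < 0 := by
  rw [spec_iff_det] at hμ
  obtain ⟨v, hv0, hv⟩ := (Matrix.exists_mulVec_eq_zero_iff).2 hμ
  have hev : (B.map (algebraMap ℝ ℂ)).mulVec v = μ • v := by
    have := hv
    rw [sub_mulVec, smul_mulVec, one_mulVec, sub_eq_zero] at this
    exact this.symm
  set x : Fin m → ℝ := fun i => (v i).re with hx
  set y : Fin m → ℝ := fun i => (v i).im with hy
  have hre : ∀ i, B.mulVec x i = μ.re * x i - μ.im * y i := by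
    intro i
    have h1 := congrFun hev i
    have h2 : ((B.map (algebraMap ℝ ℂ)).mulVec v i).re = B.mulVec x i := by
      simp [Matrix.mulVec, dotProduct, Complex.re_sum, x]
    have h3 : ((μ • v) i).re = μ.re * x i - μ.im * y i := by
      simp [x, y, Complex.mul_re]
    rw [← h2, h1, h3]
  have him : ∀ i, B.mulVec y i = μ.im * x i + μ.re * y i := by
    intro i
    have h1 := congrFun hev i
    have h2 : ((B.map (algebraMap ℝ ℂ)).mulVec v i).im = B.mulVec y i := by
      simp [Matrix.mulVec, dotProduct, Complex.im_sum, y]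
    have h3 : ((μ • v) i).im = μ.im * x i + μ.re * y i := by
      simp [x, y, Complex.mul_im]; ring
    rw [← h2, h1, h3]
  set S : ℝ := ∑ i, x i ^ 2 + ∑ i, y i ^ 2 with hS
  have hSpos : 0 < S := by
    obtain ⟨i, hi⟩ : ∃ i, v i ≠ 0 := Function.ne_iff.1 hv0
    have hxy : 0 < x i ^ 2 + y i ^ 2 := by
      have := Complex.ext_iff.not.1 hi
      push_neg at this
      rcases (by
        by_contra h
        push_neg at h
        exact hi (Complex.ext (by simpa [x] using h.1) (by simpa [y] using h.2)) :
        x i ≠ 0 ∨ y i ≠ 0) with h | h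
      · positivity
      · positivity
    have h1 : x i ^ 2 ≤ ∑ j, x j ^ 2 :=
      Finset.single_le_sum (fun j _ => sq_nonneg (x j)) (Finset.mem_univ i)
    have h2 : y i ^ 2 ≤ ∑ j, y j ^ 2 :=
      Finset.single_le_sum (fun j _ => sq_nonneg (y j)) (Finset.mem_univ i)
    nlinarith
  have hkey : μ.re * S = ∑ i, x i * B.mulVec x i + ∑ i, y i * B.mulVec y i := by
    simp only [hre, him, hS, mul_add, Finset.mul_sum, ← Finset.sum_add_distrib]
    apply Finset.sum_congr rfl
    intro i _
    ring
  have hle : μ.re * S ≤ c * S := by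
    rw [hkey, hS, mul_add]
    exact add_le_add (hB x) (hB y)
  have : μ.re ≤ c := le_of_mul_le_mul_right (by linarith [hle]) hSpos
  linarith

/-- Proposition (Appendix A): if `(A, A_u)` is stabilizable, `Λ ⪯ −β·I` with `β > 0`,
`K` renders `A + A_u·K` Hurwitz, and `‖K·A_u‖₂ < β`, then with
`H = K·A − Λ·K + K·A_u·K` the augmented matrix `Ã(H) = [[A, A_u],[H, Λ]]` is Hurwitz. -/
theorem augmented_hurwitz (n m : ℕ)
    (A : Matrix (Fin n) (Fin n) ℝ) (Au : Matrix (Fin n) (Fin m) ℝ)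
    (Λ : Matrix (Fin m) (Fin m) ℝ) (K : Matrix (Fin m) (Fin n) ℝ)
    (β : ℝ) (hβ : 0 < β)
    (hstab : ∃ K₀ : Matrix (Fin m) (Fin n) ℝ,
      ∀ μ ∈ spectrum ℂ ((A + Au * K₀).map (algebraMap ℝ ℂ)), μ.re < 0)
    (hΛ : ∀ x : EuclideanSpace ℝ (Fin m),
      ⟪x, (Matrix.toEuclideanCLM (𝕜 := ℝ) Λ) x⟫_ℝ ≤ -β * ‖x‖ ^ 2)
    (hK : ∀ μ ∈ spectrum ℂ ((A + Au * K).map (algebraMap ℝ ℂ)), μ.re < 0)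
    (hKAu : ‖Matrix.toEuclideanCLM (𝕜 := ℝ) (K * Au)‖ < β)
    (H : Matrix (Fin m) (Fin n) ℝ)
    (hH : H = K * A - Λ * K + K * Au * K) :
    ∀ μ ∈ spectrum ℂ ((Matrix.fromBlocks A Au H Λ).map (algebraMap ℝ ℂ)), μ.re < 0 := by
  intro μ hμ
  set f := algebraMap ℝ ℂ
  set A' := A.map f
  set Au' := Au.map f
  set Λ' := Λ.map f
  set K' := K.map f
  set H' := H.map f
  -- block structure of the mapped matrix
  have hmapM : (Matrix.fromBlocks A Au H Λ).map f = Matrix.fromBlocks A' Au' H' Λ' :=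
    Matrix.fromBlocks_map A Au H Λ f
  rw [hmapM, spec_iff_det] at hμ
  have hH' : H' = K' * A' - Λ' * K' + K' * Au' * K' := by
    simp only [H', hH, A', Λ', K', Au', Matrix.map_add _ (map_add f),
      Matrix.map_sub _ (map_sub f), Matrix.map_mul]
  have hTT' : Matrix.fromBlocks (1 : Matrix (Fin n) (Fin n) ℂ) 0 (-K')
      (1 : Matrix (Fin m) (Fin m) ℂ) * Matrix.fromBlocks 1 0 K' 1 = 1 := by
    rw [Matrix.fromBlocks_multiply]
    simp
  have hsim : Matrix.fromBlocks (1 : Matrix (Fin n) (Fin n) ℂ) 0 (-K')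
      (1 : Matrix (Fin m) (Fin m) ℂ) * Matrix.fromBlocks A' Au' H' Λ' *
      Matrix.fromBlocks 1 0 K' 1 =
      Matrix.fromBlocks (A' + Au' * K') Au' 0 (Λ' - K' * Au') := by
    rw [Matrix.fromBlocks_multiply, Matrix.fromBlocks_multiply, Matrix.fromBlocks_inj]
    refine ⟨by simp, by simp, ?_, by simp [neg_add_eq_sub]⟩
    rw [hH']
    simp only [Matrix.add_mul, Matrix.sub_mul, Matrix.neg_mul, Matrix.mul_one,
      Matrix.one_mul, Matrix.zero_mul, Matrix.mul_zero, zero_add, add_zero]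
    abel
  have h1 : (Matrix.fromBlocks (1 : Matrix (Fin n) (Fin n) ℂ) 0 (-K')
      (1 : Matrix (Fin m) (Fin m) ℂ)).det = 1 := by
    rw [Matrix.det_fromBlocks_zero₁₂]; simp
  have h2 : (Matrix.fromBlocks (1 : Matrix (Fin n) (Fin n) ℂ) 0 K'
      (1 : Matrix (Fin m) (Fin m) ℂ)).det = 1 := by
    rw [Matrix.det_fromBlocks_zero₁₂]; simp
  have hdet : (μ • (1 : Matrix (Fin n ⊕ Fin m) (Fin n ⊕ Fin m) ℂ) -
      Matrix.fromBlocks A' Au' H' Λ').det =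
      (μ • (1 : Matrix (Fin n) (Fin n) ℂ) - (A' + Au' * K')).det *
      (μ • (1 : Matrix (Fin m) (Fin m) ℂ) - (Λ' - K' * Au')).det := by
    have e1 : (μ • (1 : Matrix (Fin n ⊕ Fin m) (Fin n ⊕ Fin m) ℂ) -
        Matrix.fromBlocks A' Au' H' Λ').det =
        (Matrix.fromBlocks (1 : Matrix (Fin n) (Fin n) ℂ) 0 (-K')
          (1 : Matrix (Fin m) (Fin m) ℂ) *
          (μ • 1 - Matrix.fromBlocks A' Au' H' Λ') *
          Matrix.fromBlocks 1 0 K' 1).det := by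
      rw [Matrix.det_mul, Matrix.det_mul, h1, h2]; ring
    have hsmul : (μ • (1 : Matrix (Fin n ⊕ Fin m) (Fin n ⊕ Fin m) ℂ)) =
        Matrix.fromBlocks (μ • (1 : Matrix (Fin n) (Fin n) ℂ)) 0 0
          (μ • (1 : Matrix (Fin m) (Fin m) ℂ)) := by
      rw [← Matrix.fromBlocks_one, Matrix.fromBlocks_smul, smul_zero, smul_zero]
    have hsub : Matrix.fromBlocks (μ • (1 : Matrix (Fin n) (Fin n) ℂ)) 0 0
          (μ • (1 : Matrix (Fin m) (Fin m) ℂ)) -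
          Matrix.fromBlocks (A' + Au' * K') Au' 0 (Λ' - K' * Au') =
        Matrix.fromBlocks (μ • 1 - (A' + Au' * K')) (-Au') 0
          (μ • 1 - (Λ' - K' * Au')) := by
      rw [sub_eq_add_neg, Matrix.fromBlocks_neg, Matrix.fromBlocks_add, Matrix.fromBlocks_inj]
      refine ⟨by abel, by simp, by simp, by abel⟩
    rw [e1, mul_sub, sub_mul, mul_smul_comm, mul_one, smul_mul_assoc, hTT', hsim, hsmul,
      hsub, Matrix.det_fromBlocks_zero₂₁]
  rw [hdet, mul_eq_zero] at hμ
  rcases hμ with h | h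
  · -- eigenvalue of A + Au K
    apply hK μ
    rw [spec_iff_det]
    have : (A + Au * K).map f = A' + Au' * K' := by
      simp only [A', Au', K', Matrix.map_add _ (map_add f), Matrix.map_mul]
    rw [this]; exact h
  · -- eigenvalue of Λ - K Au
    set c : ℝ := ‖Matrix.toEuclideanCLM (𝕜 := ℝ) (K * Au)‖ - β with hc
    have hcneg : c < 0 := by rw [hc]; linarith
    have hquad : ∀ x : Fin m → ℝ,
        ∑ i, x i * (Λ - K * Au).mulVec x i ≤ c * ∑ i, x i ^ 2 := by
      intro x
      set x' : EuclideanSpace ℝ (Fin m) := (WithLp.equiv 2 (Fin m → ℝ)).symm x with hx'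
      have hnorm : ‖x'‖ ^ 2 = ∑ i, x i ^ 2 := by
        rw [← real_inner_self_eq_norm_sq]
        simp only [x', PiLp.inner_apply]
        simp [sq]
      have hΛx : ∑ i, x i * Λ.mulVec x i ≤ -β * ∑ i, x i ^ 2 := by
        have := hΛ x'
        rw [hnorm] at this
        simpa [PiLp.inner_apply, x', Matrix.toEuclideanCLM_toLp,
          Matrix.toLin'_apply, mul_comm] using this
      have hKx : -(∑ i, x i * (K * Au).mulVec x i)
          ≤ ‖Matrix.toEuclideanCLM (𝕜 := ℝ) (K * Au)‖ * ∑ i, x i ^ 2 := by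
        have hip : ⟪x', (Matrix.toEuclideanCLM (𝕜 := ℝ) (K * Au)) x'⟫_ℝ
            = ∑ i, x i * (K * Au).mulVec x i := by
          simp [PiLp.inner_apply, x', Matrix.toEuclideanCLM_toLp,
            Matrix.toLin'_apply, mul_comm]
        have h1 : |⟪x', (Matrix.toEuclideanCLM (𝕜 := ℝ) (K * Au)) x'⟫_ℝ|
            ≤ ‖x'‖ * ‖(Matrix.toEuclideanCLM (𝕜 := ℝ) (K * Au)) x'‖ := abs_real_inner_le_norm _ _
        have h2 : ‖(Matrix.toEuclideanCLM (𝕜 := ℝ) (K * Au)) x'‖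
            ≤ ‖Matrix.toEuclideanCLM (𝕜 := ℝ) (K * Au)‖ * ‖x'‖ :=
          ContinuousLinearMap.le_opNorm _ _
        have h3 : ‖x'‖ * ‖(Matrix.toEuclideanCLM (𝕜 := ℝ) (K * Au)) x'‖
            ≤ ‖Matrix.toEuclideanCLM (𝕜 := ℝ) (K * Au)‖ * ∑ i, x i ^ 2 := by
          calc ‖x'‖ * ‖(Matrix.toEuclideanCLM (𝕜 := ℝ) (K * Au)) x'‖
              ≤ ‖x'‖ * (‖Matrix.toEuclideanCLM (𝕜 := ℝ) (K * Au)‖ * ‖x'‖) :=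
                mul_le_mul_of_nonneg_left h2 (norm_nonneg _)
            _ = ‖Matrix.toEuclideanCLM (𝕜 := ℝ) (K * Au)‖ * ‖x'‖ ^ 2 := by ring
            _ = ‖Matrix.toEuclideanCLM (𝕜 := ℝ) (K * Au)‖ * ∑ i, x i ^ 2 := by rw [hnorm]
        have h4 : -(∑ i, x i * (K * Au).mulVec x i)
            ≤ |⟪x', (Matrix.toEuclideanCLM (𝕜 := ℝ) (K * Au)) x'⟫_ℝ| := by
          rw [hip]; exact neg_le_abs _
        exact h4.trans (h1.trans h3)
      have hsub : ∑ i, x i * (Λ - K * Au).mulVec x i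
          = ∑ i, x i * Λ.mulVec x i - ∑ i, x i * (K * Au).mulVec x i := by
        rw [Matrix.sub_mulVec, ← Finset.sum_sub_distrib]
        apply Finset.sum_congr rfl
        intro i _
        simp [Pi.sub_apply]; ring
      rw [hsub, hc]
      linarith
    have hmap : Λ' - K' * Au' = (Λ - K * Au).map f := by
      simp only [Λ', K', Au', Matrix.map_sub _ (map_sub f), Matrix.map_mul]
    rw [hmap] at h
    exact re_lt_of_quadform (Λ - K * Au) c hcneg hquad μ ((spec_iff_det _ μ).2 h)
end
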